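/- Let U be a (G,H)-biset, V an (H,K)-biset, (u,v) ∈ U × V, and L ≤ G. Then (Lᵘ)ᵛ = L^{[u,v]}, where for a subgroup L ≤ G and u ∈ U, Lᵘ := {h ∈ H | ∃ l ∈ L, (l,h) ∈ (G × H)_u}, and [u,v] denotes the class of (u,v) in U ×_H V. -/

import Mathlib

/-- For `L ≤ A` and `D ≤ A × B`, the subgroup `{b | ∃ l ∈ L, (l,b) ∈ D} ≤ B`;
for `D = (A × B)_w` the stabilizer of a point `w` of an `(A,B)`-biset, this is `Lʷ`. -/
def lstarSub {A B : Type*} [Group A] [Group B] (L : Subgroup A) (D : Subgroup (A × B)) :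
    Subgroup B where
  carrier := {b | ∃ l ∈ L, (l, b) ∈ D}
  one_mem' := ⟨1, L.one_mem, D.one_mem⟩
  mul_mem' := fun ⟨l, hl, hD⟩ ⟨l', hl', hD'⟩ =>
    ⟨l * l', L.mul_mem hl hl', D.mul_mem hD hD'⟩
  inv_mem' := fun ⟨l, hl, hD⟩ => ⟨l⁻¹, L.inv_mem hl, D.inv_mem hD⟩

section Tensor

variable (G H K : Type*) [Group G] [Group H] [Group K]
variable (U V : Type*) [MulAction (G × H) U] [MulAction (H × K) V]

/-- The setoid on `U × V` whose classes are the `H`-orbits for `h • (u,v) = (u h⁻¹, h v)`;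
bisets are encoded as `(G × H)`-sets via `(g,h) • u = g u h⁻¹`. -/
def tensorSetoid : Setoid (U × V) where
  r p q := ∃ h : H, p.1 = ((1, h) : G × H) • q.1 ∧ p.2 = ((h, 1) : H × K) • q.2
  iseqv := by
    constructor
    · intro p
      exact ⟨1, by simp [Prod.mk_one_one], by simp [Prod.mk_one_one]⟩
    · rintro p q ⟨h, h1, h2⟩
      refine ⟨h⁻¹, ?_, ?_⟩ <;>
        simp [h1, h2, smul_smul, Prod.mk_mul_mk, Prod.mk_one_one]
    · rintro p q r ⟨h, h1, h2⟩ ⟨h', h1', h2'⟩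
      refine ⟨h * h', ?_, ?_⟩ <;>
        simp [h1, h2, h1', h2', smul_smul, Prod.mk_mul_mk]

/-- The biset tensor product `U ×_H V`. -/
def Tensor : Type _ := Quotient (tensorSetoid G H K U V)

/-- The class `[u, v] ∈ U ×_H V`. -/
def tmk (p : U × V) : Tensor G H K U V := Quotient.mk (tensorSetoid G H K U V) p

/-- The `(G,K)`-biset structure on `U ×_H V`. -/
instance : MulAction (G × K) (Tensor G H K U V) where
  smul a := Quotient.map
    (fun p => (((a.1, 1) : G × H) • p.1, ((1, a.2) : H × K) • p.2))
    (by
      rintro p q ⟨h, h1, h2⟩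
      exact ⟨h, by simp [h1, smul_smul, Prod.mk_mul_mk],
        by simp [h2, smul_smul, Prod.mk_mul_mk]⟩)
  one_smul := by
    intro x
    induction x using Quotient.ind
    refine congrArg (Quotient.mk _) ?_
    simp [Prod.mk_one_one]
  mul_smul := by
    intro a b x
    induction x using Quotient.ind
    refine congrArg (Quotient.mk _) ?_
    simp [smul_smul, Prod.mk_mul_mk]

/-- `(Lᵘ)ᵛ = L^{[u,v]}` for `L ≤ G`, `u ∈ U`, `v ∈ V`. -/
theorem starL_starL [Finite G] [Finite H] [Finite K] [Finite U] [Finite V]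
    (L : Subgroup G) (u : U) (v : V) :
    lstarSub (lstarSub L (MulAction.stabilizer (G × H) u)) (MulAction.stabilizer (H × K) v) =
      lstarSub L (MulAction.stabilizer (G × K) (tmk G H K U V (u, v))) := by
  ext k
  constructor
  · rintro ⟨h, ⟨l, hl, hu⟩, hv⟩
    refine ⟨l, hl, ?_⟩
    have hu' : ((l, h) : G × H) • u = u := hu
    have hv' : ((h, k) : H × K) • v = v := hv
    show ((l, k) : G × K) • tmk G H K U V (u, v) = tmk G H K U V (u, v)
    refine Quotient.sound ⟨h⁻¹, ?_, ?_⟩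
    · have : ((1, h) : G × H) • (((l, 1) : G × H) • u) = u := by
        rw [smul_smul, Prod.mk_mul_mk]; simpa using hu'
      calc ((l, 1) : G × H) • u = ((1, h⁻¹) : G × H) • (((1, h) : G × H) • (((l, 1) : G × H) • u)) := by
            rw [smul_smul, Prod.mk_mul_mk]; simp [Prod.mk_one_one]
        _ = ((1, h⁻¹) : G × H) • u := by rw [this]
    · have : ((h, 1) : H × K) • (((1, k) : H × K) • v) = v := by
        rw [smul_smul, Prod.mk_mul_mk]; simpa using hv'
      calc ((1, k) : H × K) • v = ((h⁻¹, 1) : H × K) • (((h, 1) : H × K) • (((1, k) : H × K) • v)) := by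
            rw [smul_smul, Prod.mk_mul_mk]; simp [Prod.mk_one_one]
        _ = ((h⁻¹, 1) : H × K) • v := by rw [this]
  · rintro ⟨l, hl, hst⟩
    have hst' : ((l, k) : G × K) • tmk G H K U V (u, v) = tmk G H K U V (u, v) := hst
    obtain ⟨h', h1, h2⟩ := Quotient.exact hst'
    simp only at h1 h2
    refine ⟨h'⁻¹, ⟨l, hl, ?_⟩, ?_⟩
    · show ((l, h'⁻¹) : G × H) • u = u
      have : ((1, h'⁻¹) : G × H) • (((l, 1) : G × H) • u) = u := by
        rw [h1, smul_smul, Prod.mk_mul_mk]; simp [Prod.mk_one_one]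
      rw [smul_smul, Prod.mk_mul_mk] at this; simpa using this
    · show ((h'⁻¹, k) : H × K) • v = v
      have : ((h'⁻¹, 1) : H × K) • (((1, k) : H × K) • v) = v := by
        rw [h2, smul_smul, Prod.mk_mul_mk]; simp [Prod.mk_one_one]
      rw [smul_smul, Prod.mk_mul_mk] at this; simpa using this

end Tensor
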